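/- Let R be a weakly 5-fold stable commutative ring. Then for all units r, s ∈ R^*, in K^M_2(R) one has {r, −r} = 0 and {r, s} = −{s, r}. -/

import Mathlib

/-- The relations defining the Milnor K-group of a commutative ring `S`:
multilinearity relations and Steinberg relations (a generator `r₁ ⊗ … ⊗ r_n` with some
pair of consecutive entries summing to `1`). -/
def milnorRelSet (S : Type*) [CommRing S] (n : ℕ) : Set (FreeAbelianGroup (Fin n → Sˣ)) :=
  {x | ∃ (f : Fin n → Sˣ) (i : Fin n) (u v : Sˣ),
      x = FreeAbelianGroup.of (Function.update f i (u * v))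
        - FreeAbelianGroup.of (Function.update f i u)
        - FreeAbelianGroup.of (Function.update f i v)} ∪
  {x | ∃ (f : Fin n → Sˣ) (i j : Fin n), (i : ℕ) + 1 = (j : ℕ) ∧
      ((f i : S) + (f j : S) = 1) ∧ x = FreeAbelianGroup.of f}

/-- The `n`-th Milnor K-group of a commutative ring `S`: the quotient of `(Sˣ)^{⊗ n}`
(presented as the free abelian group on `n`-tuples of units, modulo multilinearity)
by the Steinberg relations. -/
def MilnorK (S : Type*) [CommRing S] (n : ℕ) : Type _ :=
  FreeAbelianGroup (Fin n → Sˣ) ⧸ AddSubgroup.closure (milnorRelSet S n)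

instance (S : Type*) [CommRing S] (n : ℕ) : AddCommGroup (MilnorK S n) :=
  QuotientAddGroup.Quotient.addCommGroup _

/-- The Milnor symbol `{r₁, …, r_n}`. -/
def milnorSymbol {S : Type*} [CommRing S] {n : ℕ} (f : Fin n → Sˣ) : MilnorK S n :=
  QuotientAddGroup.mk (FreeAbelianGroup.of f)

/-- Functoriality of Milnor K-groups in ring homomorphisms. -/
def MilnorK.map {S T : Type*} [CommRing S] [CommRing T] (φ : S →+* T) (n : ℕ) :
    MilnorK S n →+ MilnorK T n := by
  refine QuotientAddGroup.lift _
    ((QuotientAddGroup.mk' (AddSubgroup.closure (milnorRelSet T n))).comp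
      (FreeAbelianGroup.map (fun f => (Units.map (φ : S →* T)) ∘ f))) ?_
  intro x hx
  revert x hx
  rw [← SetLike.le_def, AddSubgroup.closure_le]
  rintro x (⟨f, i, u, v, rfl⟩ | ⟨f, i, j, hij, hsum, rfl⟩) <;>
    simp only [SetLike.mem_coe, AddMonoidHom.mem_ker, map_sub]
  · show milnorSymbol (Units.map (φ : S →* T) ∘ Function.update f i (u * v))
      - milnorSymbol (Units.map (φ : S →* T) ∘ Function.update f i u)
      - milnorSymbol (Units.map (φ : S →* T) ∘ Function.update f i v) = (0 : MilnorK T n)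
    unfold milnorSymbol
    refine (QuotientAddGroup.eq_zero_iff (N := AddSubgroup.closure (milnorRelSet T n))
      (FreeAbelianGroup.of _ - FreeAbelianGroup.of _ - FreeAbelianGroup.of _)).mpr ?_
    refine AddSubgroup.subset_closure (Or.inl ⟨Units.map (φ : S →* T) ∘ f, i,
      Units.map (φ : S →* T) u, Units.map (φ : S →* T) v, ?_⟩)
    simp [Function.comp_update]
  · show milnorSymbol (Units.map (φ : S →* T) ∘ f) = (0 : MilnorK T n)
    unfold milnorSymbol
    erw [QuotientAddGroup.eq_zero_iff]
    refine AddSubgroup.subset_closure (Or.inr ⟨Units.map (φ : S →* T) ∘ f, i, j, hij, ?_, rfl⟩)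
    simp only [Function.comp_apply, Units.coe_map, MonoidHom.coe_coe]
    rw [← map_add, hsum, map_one]

/-- A commutative ring `R` is weakly `k`-fold stable if for any `k - 1` elements
there is a unit `r` such that adding `r` to each of them yields a unit. -/
def WeaklyStable (R : Type*) [CommRing R] (k : ℕ) : Prop :=
  ∀ r : Fin (k - 1) → R, ∃ u : Rˣ, ∀ i, IsUnit (r i + (u : R))

namespace Stmt15Aux

variable {R : Type*} [CommRing R]

lemma mk_rel_zero {x : FreeAbelianGroup (Fin 2 → Rˣ)} (hx : x ∈ milnorRelSet R 2) :
    (QuotientAddGroup.mk x : MilnorK R 2) = 0 :=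
  (QuotientAddGroup.eq_zero_iff x).2 (AddSubgroup.subset_closure hx)

lemma upd0 (x y w : Rˣ) : Function.update ![x, y] (0 : Fin 2) w = ![w, y] := by
  funext i; fin_cases i <;> simp

lemma upd1 (x y w : Rˣ) : Function.update ![x, y] (1 : Fin 2) w = ![x, w] := by
  funext i; fin_cases i <;> simp

lemma symbol_sub_sub (a b c : Fin 2 → Rˣ)
    (h : FreeAbelianGroup.of a - FreeAbelianGroup.of b - FreeAbelianGroup.of c ∈
      milnorRelSet R 2) :
    milnorSymbol a = milnorSymbol b + (milnorSymbol c : MilnorK R 2) := by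
  have h2 := mk_rel_zero h
  rw [QuotientAddGroup.mk_sub, QuotientAddGroup.mk_sub] at h2
  have h3 : (milnorSymbol a : MilnorK R 2) - milnorSymbol b - milnorSymbol c = 0 := h2
  rw [sub_sub, sub_eq_zero] at h3
  exact h3

lemma steinberg (x y : Rˣ) (h : (x : R) + y = 1) :
    milnorSymbol ![x, y] = (0 : MilnorK R 2) :=
  mk_rel_zero (Or.inr ⟨![x, y], 0, 1, rfl, by simpa using h, rfl⟩)

lemma mull (u v y : Rˣ) :
    milnorSymbol ![u * v, y] = milnorSymbol ![u, y] + (milnorSymbol ![v, y] : MilnorK R 2) :=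
  symbol_sub_sub _ _ _ (Or.inl ⟨![u, y], 0, u, v, by rw [upd0, upd0, upd0]⟩)

lemma mulr (x u v : Rˣ) :
    milnorSymbol ![x, u * v] = milnorSymbol ![x, u] + (milnorSymbol ![x, v] : MilnorK R 2) :=
  symbol_sub_sub _ _ _ (Or.inl ⟨![x, u], 1, u, v, by rw [upd1, upd1, upd1]⟩)

lemma one_left (y : Rˣ) : milnorSymbol ![1, y] = (0 : MilnorK R 2) := by
  have h := mull (R := R) 1 1 y
  rw [one_mul] at h
  exact add_eq_left.mp h.symm

lemma one_right (x : Rˣ) : milnorSymbol ![x, 1] = (0 : MilnorK R 2) := by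
  have h := mulr (R := R) x 1 1
  rw [one_mul] at h
  exact add_eq_left.mp h.symm

lemma inv_left (x y : Rˣ) :
    milnorSymbol ![x⁻¹, y] = -(milnorSymbol ![x, y] : MilnorK R 2) := by
  have h := mull (R := R) x x⁻¹ y
  rw [mul_inv_cancel, one_left] at h
  exact (neg_eq_of_add_eq_zero_right h.symm).symm

lemma inv_right (x y : Rˣ) :
    milnorSymbol ![x, y⁻¹] = -(milnorSymbol ![x, y] : MilnorK R 2) := by
  have h := mulr (R := R) x y y⁻¹
  rw [mul_inv_cancel, one_right] at h
  exact (neg_eq_of_add_eq_zero_right h.symm).symm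

lemma hyp_angle (x : Rˣ) (hx : IsUnit ((1 : R) - x)) :
    milnorSymbol ![x, -x] = (0 : MilnorK R 2) := by
  obtain ⟨w, hw⟩ := hx
  set w' : Rˣ := -(x⁻¹ * w) with hw'def
  have key : (-x : Rˣ) = w * w'⁻¹ := by
    rw [eq_mul_inv_iff_mul_eq, hw'def, neg_mul_neg, ← mul_assoc, mul_inv_cancel, one_mul]
  have hw' : (w' : R) = 1 - ↑x⁻¹ := by
    have hxi : (↑x⁻¹ : R) * ↑x = 1 := x.inv_mul
    rw [hw'def, Units.val_neg, Units.val_mul, hw, mul_sub, mul_one, hxi]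
    ring
  have h1 : milnorSymbol ![x, w] = (0 : MilnorK R 2) := steinberg _ _ (by rw [hw]; ring)
  have h2 : milnorSymbol ![x⁻¹, w'] = (0 : MilnorK R 2) := steinberg _ _ (by rw [hw']; ring)
  have h3 : milnorSymbol ![x, w'] = (0 : MilnorK R 2) := by
    have := inv_left (R := R) x w'
    rw [h2] at this
    simpa using this.symm
  rw [key, mulr, h1, inv_right, h3]
  simp

lemma c_eq (x y : Rˣ) :
    milnorSymbol ![x, y] + (milnorSymbol ![y, x] : MilnorK R 2)
      = milnorSymbol ![x * y, -(x * y)] - milnorSymbol ![x, -x] - milnorSymbol ![y, -y] := by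
  have h1 := mull (R := R) x y (-(x * y))
  have h2 : milnorSymbol ![x, -(x * y)]
      = milnorSymbol ![x, -x] + (milnorSymbol ![x, y] : MilnorK R 2) := by
    rw [show -(x * y) = (-x) * y from (neg_mul x y).symm, mulr]
  have h3 : milnorSymbol ![y, -(x * y)]
      = milnorSymbol ![y, x] + (milnorSymbol ![y, -y] : MilnorK R 2) := by
    rw [show -(x * y) = x * (-y) from (mul_neg x y).symm, mulr]
  rw [h2, h3] at h1
  rw [h1]; abel

lemma cor (x y : Rˣ) (hx : IsUnit ((1 : R) - x)) (hy : IsUnit ((1 : R) - y))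
    (hxy : IsUnit ((1 : R) - ↑(x * y))) :
    milnorSymbol ![x, y] = -(milnorSymbol ![y, x] : MilnorK R 2) := by
  have h := c_eq (R := R) x y
  rw [hyp_angle x hx, hyp_angle y hy, hyp_angle (x * y) hxy] at h
  simp only [sub_zero] at h
  exact eq_neg_of_add_eq_zero_left h


lemma angle_zero (hst : WeaklyStable R 5) (r : Rˣ) :
    milnorSymbol ![r, -r] = (0 : MilnorK R 2) := by
  obtain ⟨a, ha⟩ := hst ![-1, -(r : R), 0, 0]
  have ha0 : IsUnit (-(1 : R) + a) := by simpa using ha 0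
  have har : IsUnit (-(r : R) + a) := by simpa using ha 1
  have ha1 : IsUnit ((1 : R) - a) := by
    have e : ((1 : R) - a) = -(-(1 : R) + a) := by ring
    rw [e]; exact ha0.neg
  set b : Rˣ := a⁻¹ * r with hbdef
  have hb1 : IsUnit ((1 : R) - b) := by
    have e : ((1 : R) - ↑b) = ↑a⁻¹ * (-(r : R) + ↑a) := by
      rw [hbdef, Units.val_mul]; linear_combination -a.inv_mul
    rw [e]; exact (Units.isUnit a⁻¹).mul har
  have hr : r = a * b := by rw [hbdef, mul_inv_cancel_left]
  obtain ⟨t, ht⟩ := hst ![-1, -(↑a⁻¹ : R), -(↑b⁻¹ : R), -(↑(a * b)⁻¹ : R)]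
  have ht0 : IsUnit (-(1 : R) + t) := by simpa using ht 0
  have ht1 : IsUnit (-(↑a⁻¹ : R) + t) := by simpa using ht 1
  have ht2 : IsUnit (-(↑b⁻¹ : R) + t) := by simpa using ht 2
  have ht3 : IsUnit (-(↑(a * b)⁻¹ : R) + t) := by simpa using ht 3
  have hT1 : IsUnit ((1 : R) - t) := by
    have e : ((1 : R) - t) = -(-(1 : R) + t) := by ring
    rw [e]; exact ht0.neg
  have hAT : IsUnit ((1 : R) - ↑(a * t)) := by
    have e : ((1 : R) - ↑(a * t)) = ↑a * (-(-(↑a⁻¹ : R) + t)) := by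
      rw [Units.val_mul]; linear_combination -a.mul_inv
    rw [e]; exact a.isUnit.mul ht1.neg
  have hTB : IsUnit ((1 : R) - ↑(t * b)) := by
    have e : ((1 : R) - ↑(t * b)) = ↑b * (-(-(↑b⁻¹ : R) + t)) := by
      rw [Units.val_mul]; linear_combination -b.mul_inv
    rw [e]; exact b.isUnit.mul ht2.neg
  have hATB : IsUnit ((1 : R) - ↑(a * (t * b))) := by
    have hAB : (↑a * ↑b : R) * ↑(a * b)⁻¹ = 1 := by
      rw [← Units.val_mul]; exact (a * b).mul_inv
    have e : ((1 : R) - ↑(a * (t * b))) = ↑(a * b) * (-(-(↑(a * b)⁻¹ : R) + t)) := by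
      push_cast [Units.val_mul]; linear_combination -hAB
    rw [e]; exact (a * b).isUnit.mul ht3.neg
  have c1 : milnorSymbol ![a, t] = -(milnorSymbol ![t, a] : MilnorK R 2) := cor a t ha1 hT1 hAT
  have c2 : milnorSymbol ![a, t * b] = -(milnorSymbol ![t * b, a] : MilnorK R 2) :=
    cor a (t * b) ha1 hTB hATB
  rw [mulr, mull, c1, neg_add] at c2
  have h4 := add_left_cancel c2
  have h5 : milnorSymbol ![a, b] + (milnorSymbol ![b, a] : MilnorK R 2) = 0 := by
    rw [h4]; exact neg_add_cancel _
  have key := c_eq (R := R) a b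
  rw [hyp_angle a ha1, hyp_angle b hb1] at key
  simp only [sub_zero] at key
  rw [hr, ← key]
  exact h5

end Stmt15Aux


/-- in a weakly 5-fold stable ring `R`, for all units `r, s`,
`{r, −r} = 0` and `{r, s} = −{s, r}` in `K^M_2(R)`. -/
theorem stmt_15 (R : Type*) [CommRing R] (hst : WeaklyStable R 5) (r s : Rˣ) :
    milnorSymbol ![r, -r] = (0 : MilnorK R 2) ∧
    milnorSymbol ![r, s] = -(milnorSymbol ![s, r] : MilnorK R 2) := by
  refine ⟨Stmt15Aux.angle_zero hst r, ?_⟩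
  have key := Stmt15Aux.c_eq (R := R) r s
  rw [Stmt15Aux.angle_zero hst r, Stmt15Aux.angle_zero hst s,
    Stmt15Aux.angle_zero hst (r * s)] at key
  simp only [sub_zero] at key
  exact eq_neg_of_add_eq_zero_left key
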